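/- (Exactness of the matrix-element quadrature.) Let N ≥ 1, let J be the N×N Jacobi matrix of an orthonormal polynomial sequence (p_n) for μ, let ε_0, …, ε_{N−1} be the eigenvalues of J, and for each k let Λ_{·,k} be the unit eigenvector of J for ε_k normalized so that Λ_{0,k} > 0. Then for all 0 ≤ n, m ≤ N−1 and every real polynomial f with n + m + deg f ≤ 2N − 1, ∫ p_n(x) f(x) p_m(x) dμ(x) = ∑_{k=0}^{N−1} Λ_{n,k} f(ε_k) Λ_{m,k}. -/

import Mathlib

open MeasureTheory Polynomial Matrix

/-- `p` is the orthonormal polynomial sequence for the measure `μ`: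
`p n` has degree `n`, positive leading coefficient, and `∫ pₙ pₘ dμ = δₙₘ`. -/
structure IsOrthonormalPolySeq (μ : Measure ℝ) (p : ℕ → Polynomial ℝ) : Prop where
  natDegree_eq : ∀ n, (p n).natDegree = n
  leadingCoeff_pos : ∀ n, 0 < (p n).leadingCoeff
  orthonormal : ∀ n m,
    ∫ x, (p n).eval x * (p m).eval x ∂μ = if n = m then (1 : ℝ) else 0

/-- The `N × N` Jacobi matrix of the orthonormal polynomial sequence `p` for `μ`:
diagonal entries `aₙ = ∫ x pₙ(x)² dμ`, off-diagonal entries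
`bₙ = ∫ x pₙ(x) pₙ₊₁(x) dμ`, and zero elsewhere. -/
noncomputable def jacobiMatrix (μ : Measure ℝ) (p : ℕ → Polynomial ℝ) (N : ℕ) :
    Matrix (Fin N) (Fin N) ℝ := fun i j =>
  if (i : ℕ) = (j : ℕ) then ∫ x, x * ((p (i : ℕ)).eval x) ^ 2 ∂μ
  else if (i : ℕ) + 1 = (j : ℕ) then
    ∫ x, x * (p (i : ℕ)).eval x * (p ((i : ℕ) + 1)).eval x ∂μ
  else if (j : ℕ) + 1 = (i : ℕ) then
    ∫ x, x * (p (j : ℕ)).eval x * (p ((j : ℕ) + 1)).eval x ∂μ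
  else 0

noncomputable def Lint (μ : Measure ℝ) (q : Polynomial ℝ) : ℝ := ∫ x, q.eval x ∂μ

section Aux

variable {μ : Measure ℝ} {p : ℕ → Polynomial ℝ}
variable (hmom : ∀ k : ℕ, Integrable (fun x : ℝ => x ^ k) μ)

include hmom in
lemma integ_poly (q : Polynomial ℝ) : Integrable (fun x => q.eval x) μ := by
  have h : (fun x : ℝ => q.eval x)
      = fun x => ∑ i ∈ Finset.range (q.natDegree + 1), q.coeff i * x ^ i := by
    funext x; rw [Polynomial.eval_eq_sum_range]
  rw [h]
  exact integrable_finset_sum _ fun i _ => (hmom i).const_mul _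

include hmom in
lemma Lint_add (q r : Polynomial ℝ) : Lint μ (q + r) = Lint μ q + Lint μ r := by
  unfold Lint
  simp only [Polynomial.eval_add]
  exact integral_add (integ_poly hmom q) (integ_poly hmom r)

lemma Lint_smul (c : ℝ) (q : Polynomial ℝ) : Lint μ (c • q) = c * Lint μ q := by
  unfold Lint
  simp only [Polynomial.eval_smul, smul_eq_mul]
  exact integral_const_mul c _

include hmom in
lemma Lint_sum {ι : Type*} (s : Finset ι) (g : ι → Polynomial ℝ) :
    Lint μ (∑ i ∈ s, g i) = ∑ i ∈ s, Lint μ (g i) := by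
  classical
  induction s using Finset.induction_on with
  | empty => simp [Lint]
  | insert _ _ h ih => rw [Finset.sum_insert h, Lint_add hmom, ih, Finset.sum_insert h]

variable (hp : IsOrthonormalPolySeq μ p)
include hp

lemma p_coeff_ne (i : ℕ) : (p i).coeff i ≠ 0 := by
  have := hp.leadingCoeff_pos i
  rw [Polynomial.leadingCoeff, hp.natDegree_eq i] at this
  exact ne_of_gt this

lemma LintPP (i j : ℕ) : Lint μ (p i * p j) = if i = j then (1:ℝ) else 0 := by
  simpa [Lint, Polynomial.eval_mul] using hp.orthonormal i j

include hmom in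
lemma orth : ∀ d (q : Polynomial ℝ), q.natDegree ≤ d → ∀ i, d < i → Lint μ (p i * q) = 0 := by
  intro d
  induction d with
  | zero =>
    intro q hq i hi
    have hq0 : q = C (q.coeff 0) := eq_C_of_natDegree_le_zero hq
    have hp0 : p 0 = C ((p 0).coeff 0) :=
      eq_C_of_natDegree_le_zero (le_of_eq (hp.natDegree_eq 0))
    have hc : (p 0).coeff 0 ≠ 0 := p_coeff_ne hp 0
    have hq1 : q = (q.coeff 0 / (p 0).coeff 0) • p 0 := by
      rw [Polynomial.smul_eq_C_mul]
      conv_lhs => rw [hq0]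
      rw [hp0, ← Polynomial.C_mul]
      congr 1
      simp only [Polynomial.coeff_C_zero]
      field_simp
    rw [hq1, mul_smul_comm, Lint_smul, LintPP hp]
    simp [Nat.pos_iff_ne_zero.mp hi]
  | succ d ih =>
    intro q hq i hi
    set c := q.coeff (d+1) / (p (d+1)).coeff (d+1) with hc
    set r := q - c • p (d+1) with hr
    have hrd : r.natDegree ≤ d := by
      rw [Polynomial.natDegree_le_iff_coeff_eq_zero]
      intro M hM
      rcases Nat.lt_or_ge (d+1) M with h | h
      · simp [hr, Polynomial.coeff_sub]
        rw [Polynomial.coeff_eq_zero_of_natDegree_lt (lt_of_le_of_lt hq h),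
          Polynomial.coeff_eq_zero_of_natDegree_lt (by rw [hp.natDegree_eq]; exact h)]
        simp
      · have hM1 : M = d + 1 := le_antisymm h hM
        subst hM1
        have hcc := p_coeff_ne hp (d+1)
        simp only [hr, Polynomial.coeff_sub, Polynomial.coeff_smul, smul_eq_mul, hc]
        field_simp
        simp
    have hq' : q = r + c • p (d+1) := by rw [hr]; ring
    rw [hq', mul_add, Lint_add hmom, ih r hrd i (Nat.lt_of_succ_lt hi),
      mul_smul_comm, Lint_smul, LintPP hp]
    simp [Nat.ne_of_gt hi]

end Aux

section More
variable {μ : Measure ℝ} {p : ℕ → Polynomial ℝ}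
variable (hmom : ∀ k : ℕ, Integrable (fun x : ℝ => x ^ k) μ)
variable (hp : IsOrthonormalPolySeq μ p)
include hmom hp

lemma expandP : ∀ d (q : Polynomial ℝ), q.natDegree ≤ d →
    q = ∑ j ∈ Finset.range (d+1), Lint μ (q * p j) • p j := by
  intro d
  induction d with
  | zero =>
    intro q hq
    have hq0 : q = C (q.coeff 0) := eq_C_of_natDegree_le_zero hq
    have hp0 : p 0 = C ((p 0).coeff 0) :=
      eq_C_of_natDegree_le_zero (le_of_eq (hp.natDegree_eq 0))
    have hc : (p 0).coeff 0 ≠ 0 := p_coeff_ne hp 0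
    have hq1 : q = (q.coeff 0 / (p 0).coeff 0) • p 0 := by
      rw [Polynomial.smul_eq_C_mul]
      conv_lhs => rw [hq0]
      rw [hp0, ← Polynomial.C_mul]
      congr 1
      simp only [Polynomial.coeff_C_zero]
      field_simp
    rw [Finset.sum_range_one]
    conv_lhs => rw [hq1]
    rw [hq1, smul_mul_assoc, Lint_smul, LintPP hp]
    simp only [Polynomial.coeff_smul, smul_eq_mul, if_true]
    congr 1
    field_simp
  | succ d ih =>
    intro q hq
    set c := q.coeff (d+1) / (p (d+1)).coeff (d+1) with hcdef
    set r := q - c • p (d+1) with hr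
    have hrd : r.natDegree ≤ d := by
      rw [Polynomial.natDegree_le_iff_coeff_eq_zero]
      intro M hM
      rcases Nat.lt_or_ge (d+1) M with h | h
      · simp only [hr, Polynomial.coeff_sub, Polynomial.coeff_smul, smul_eq_mul]
        rw [Polynomial.coeff_eq_zero_of_natDegree_lt (lt_of_le_of_lt hq h),
          Polynomial.coeff_eq_zero_of_natDegree_lt (by rw [hp.natDegree_eq]; exact h)]
        simp
      · have hM1 : M = d + 1 := le_antisymm h hM
        subst hM1
        have hcc := p_coeff_ne hp (d+1)
        simp only [hr, Polynomial.coeff_sub, Polynomial.coeff_smul, smul_eq_mul, hcdef]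
        field_simp
        simp
    have hq' : q = r + c • p (d+1) := by rw [hr]; ring
    have hterm : ∀ j, Lint μ (q * p j) = Lint μ (r * p j) + c * Lint μ (p (d+1) * p j) := by
      intro j
      conv_lhs => rw [hq']
      rw [add_mul, Lint_add hmom, smul_mul_assoc, Lint_smul]
    rw [Finset.sum_range_succ]
    have h1 : ∀ j ∈ Finset.range (d+1), Lint μ (q * p j) • p j = Lint μ (r * p j) • p j := by
      intro j hj
      have hj' := Finset.mem_range.mp hj
      rw [hterm j, LintPP hp, if_neg (by omega), mul_zero, add_zero]
    have h2 : Lint μ (r * p (d+1)) = 0 := by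
      rw [show r * p (d+1) = p (d+1) * r from mul_comm _ _]
      exact orth hmom hp d r hrd (d+1) (by omega)
    rw [Finset.sum_congr rfl h1, ← ih r hrd, hterm (d+1), LintPP hp, h2,
      if_pos rfl, mul_one, zero_add]
    exact hq'

noncomputable def aJ (μ : Measure ℝ) (p : ℕ → Polynomial ℝ) (i : ℕ) : ℝ :=
  Lint μ (X * p i * p i)
noncomputable def bJ (μ : Measure ℝ) (p : ℕ → Polynomial ℝ) (i : ℕ) : ℝ :=
  Lint μ (X * p i * p (i+1))

omit hmom in
lemma natDegree_X_mul_p (i : ℕ) : (X * p i).natDegree ≤ i + 1 := by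
  refine le_trans (Polynomial.natDegree_mul_le) ?_
  simp [Polynomial.natDegree_X, hp.natDegree_eq]
  omega

lemma recursion_zero : X * p 0 = aJ μ p 0 • p 0 + bJ μ p 0 • p 1 := by
  have h := expandP hmom hp 1 (X * p 0) (natDegree_X_mul_p hp 0)
  rw [Finset.sum_range_succ, Finset.sum_range_one] at h
  rw [h]
  rfl

lemma recursion_succ (k : ℕ) :
    X * p (k+1) = bJ μ p k • p k + aJ μ p (k+1) • p (k+1) + bJ μ p (k+1) • p (k+2) := by
  have h := expandP hmom hp (k+2) (X * p (k+1)) (natDegree_X_mul_p hp (k+1))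
  rw [Finset.sum_range_succ, Finset.sum_range_succ, Finset.sum_range_succ] at h
  have h1 : ∀ j ∈ Finset.range k, Lint μ (X * p (k+1) * p j) • p j = 0 := by
    intro j hj
    rw [show X * p (k+1) * p j = p (k+1) * (X * p j) from by ring]
    rw [orth hmom hp (j+1) (X * p j) (natDegree_X_mul_p hp j) (k+1)
      (by simp at hj; omega)]
    simp
  rw [Finset.sum_eq_zero h1, zero_add] at h
  rw [h]
  have hb : Lint μ (X * p (k+1) * p k) = bJ μ p k := by
    unfold bJ; congr 1; ring
  rw [hb]
  rfl

end More

noncomputable def TT (μ : Measure ℝ) (p : ℕ → Polynomial ℝ) (d i j : ℕ) : ℝ :=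
  Lint μ (X ^ d * p i * p j)

section More2
variable {μ : Measure ℝ} {p : ℕ → Polynomial ℝ}
variable (hmom : ∀ k : ℕ, Integrable (fun x : ℝ => x ^ k) μ)
variable (hp : IsOrthonormalPolySeq μ p)
include hmom hp

omit hmom in
lemma TT_zero (i j : ℕ) : TT μ p 0 i j = if i = j then (1:ℝ) else 0 := by
  unfold TT
  rw [pow_zero, one_mul]
  exact LintPP hp i j

lemma TT_high (d i j : ℕ) (h : d + j < i) : TT μ p d i j = 0 := by
  unfold TT
  rw [show X ^ d * p i * p j = p i * (X ^ d * p j) from by ring]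
  refine orth hmom hp (d + j) _ ?_ i h
  refine le_trans (Polynomial.natDegree_mul_le) ?_
  simp [Polynomial.natDegree_X_pow, hp.natDegree_eq]

lemma TT_succ (d i j : ℕ) :
    TT μ p (d+1) i j = (if i = 0 then 0 else bJ μ p (i-1) * TT μ p d (i-1) j)
      + aJ μ p i * TT μ p d i j + bJ μ p i * TT μ p d (i+1) j := by
  cases i with
  | zero =>
    have key : X ^ (d+1) * p 0 * p j
        = aJ μ p 0 • (X ^ d * p 0 * p j) + bJ μ p 0 • (X ^ d * p 1 * p j) := by
      calc X ^ (d+1) * p 0 * p j = X ^ d * (X * p 0) * p j := by ring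
      _ = X ^ d * (aJ μ p 0 • p 0 + bJ μ p 0 • p 1) * p j := by
          rw [recursion_zero hmom hp]
      _ = _ := by simp only [Polynomial.smul_eq_C_mul]; ring
    unfold TT
    rw [key, Lint_add hmom, Lint_smul, Lint_smul]
    simp [TT]
  | succ k =>
    have key : X ^ (d+1) * p (k+1) * p j
        = bJ μ p k • (X ^ d * p k * p j) + aJ μ p (k+1) • (X ^ d * p (k+1) * p j)
          + bJ μ p (k+1) • (X ^ d * p (k+2) * p j) := by
      calc X ^ (d+1) * p (k+1) * p j = X ^ d * (X * p (k+1)) * p j := by ring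
      _ = X ^ d * (bJ μ p k • p k + aJ μ p (k+1) • p (k+1) + bJ μ p (k+1) • p (k+2)) * p j := by
          rw [recursion_succ hmom hp]
      _ = _ := by simp only [Polynomial.smul_eq_C_mul]; ring
    unfold TT
    rw [key, Lint_add hmom, Lint_add hmom, Lint_smul, Lint_smul, Lint_smul]
    simp [TT]

omit hmom hp in
lemma jacobi_apply (N : ℕ) (i j : Fin N) :
    jacobiMatrix μ p N i j =
      if (i : ℕ) = (j : ℕ) then aJ μ p i
      else if (i : ℕ) + 1 = (j : ℕ) then bJ μ p i
      else if (j : ℕ) + 1 = (i : ℕ) then bJ μ p j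
      else 0 := by
  unfold jacobiMatrix aJ bJ Lint
  have h1 : (fun x : ℝ => Polynomial.eval x (X * p (i:ℕ) * p (i:ℕ)))
      = fun x => x * (Polynomial.eval x (p (i:ℕ))) ^ 2 := by
    funext x; simp [Polynomial.eval_mul]; ring
  have h2 : ∀ l : ℕ, (fun x : ℝ => Polynomial.eval x (X * p l * p (l+1)))
      = fun x => x * Polynomial.eval x (p l) * Polynomial.eval x (p (l+1)) := by
    intro l; funext x; simp [Polynomial.eval_mul]
  split_ifs <;> simp [h1, h2, pow_two, mul_assoc]

end More2

lemma finsum_ind (N c : ℕ) (v : ℝ) :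
    ∑ l : Fin N, (if (l : ℕ) = c then v else 0) = if c < N then v else 0 := by
  rw [Fin.sum_univ_eq_sum_range (fun l => if l = c then v else 0) N,
    Finset.sum_ite_eq' (Finset.range N) c (fun _ => v)]
  simp

lemma finsum_ind' (N c : ℕ) (v : ℝ) :
    ∑ l : Fin N, (if (l : ℕ) + 1 = c then v else 0)
      = if c ≠ 0 ∧ c - 1 < N then v else 0 := by
  rcases c with _ | c'
  · simp
  · have h : ∀ l : Fin N, (if (l : ℕ) + 1 = c' + 1 then v else 0)
        = (if (l : ℕ) = c' then v else 0) := by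
      intro l; simp
    rw [Finset.sum_congr rfl (fun l _ => h l), finsum_ind]
    simp

section More3
variable {μ : Measure ℝ} {p : ℕ → Polynomial ℝ}
variable (hmom : ∀ k : ℕ, Integrable (fun x : ℝ => x ^ k) μ)
variable (hp : IsOrthonormalPolySeq μ p)
include hmom hp

lemma Jpow (N : ℕ) : ∀ d (i j : Fin N), (i : ℕ) + (j : ℕ) + d ≤ 2 * N - 1 →
    ((jacobiMatrix μ p N) ^ d) i j = TT μ p d (i : ℕ) (j : ℕ) := by
  intro d
  induction d with
  | zero =>
    intro i j _
    rw [pow_zero, Matrix.one_apply, TT_zero hp]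
    simp [Fin.ext_iff]
  | succ d ih =>
    intro i j hb
    have hN : 0 < N := i.pos
    have hiN : (i : ℕ) < N := i.isLt
    rw [pow_succ', Matrix.mul_apply]
    have hterm : ∀ l : Fin N, jacobiMatrix μ p N i l * ((jacobiMatrix μ p N) ^ d) l j
        = (if (l : ℕ) = (i : ℕ) then aJ μ p i * TT μ p d i j else 0)
        + (if (l : ℕ) = (i : ℕ) + 1 then bJ μ p i * TT μ p d ((i : ℕ) + 1) j else 0)
        + (if (l : ℕ) + 1 = (i : ℕ) then bJ μ p ((i : ℕ) - 1) * TT μ p d ((i : ℕ) - 1) j else 0) := by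
      intro l
      rw [jacobi_apply]
      rcases Nat.lt_trichotomy (l : ℕ) (i : ℕ) with h | h | h
      · rcases Nat.lt_or_ge ((l : ℕ) + 1) (i : ℕ) with h2 | h2
        · rw [if_neg (by omega), if_neg (by omega), if_neg (by omega),
            if_neg (by omega), if_neg (by omega), if_neg (by omega)]
          ring
        · have hl1 : (l : ℕ) + 1 = (i : ℕ) := by omega
          rw [if_neg (by omega), if_neg (by omega), if_pos hl1,
            if_neg (by omega), if_neg (by omega), if_pos hl1,
            ih l j (by omega)]
          have : (l : ℕ) = (i : ℕ) - 1 := by omega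
          rw [this]
          ring
      · rw [if_pos h.symm, if_pos h, if_neg (by omega), if_neg (by omega),
          ih l j (by omega)]
        have : (l : ℕ) = (i : ℕ) := h
        rw [this]
        ring
      · rcases Nat.lt_or_ge ((i : ℕ) + 1) (l : ℕ) with h2 | h2
        · rw [if_neg (by omega), if_neg (by omega), if_neg (by omega),
            if_neg (by omega), if_neg (by omega), if_neg (by omega)]
          ring
        · have hl1 : (i : ℕ) + 1 = (l : ℕ) := by omega
          rw [if_neg (by omega), if_pos hl1, if_neg (by omega),
            if_pos hl1.symm, if_neg (by omega),
            ih l j (by omega)]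
          rw [← hl1]
          ring
    rw [Finset.sum_congr rfl (fun l _ => hterm l)]
    rw [Finset.sum_add_distrib, Finset.sum_add_distrib, finsum_ind, finsum_ind, finsum_ind']
    rw [TT_succ hmom hp]
    rw [if_pos hiN]
    rcases Nat.lt_or_ge ((i : ℕ) + 1) N with h3 | h3
    · rw [if_pos h3]
      by_cases h0 : (i : ℕ) = 0
      · rw [if_neg (by omega), if_pos h0]
        simp [h0]
      · rw [if_pos (by constructor <;> omega), if_neg h0]
        ring
    · have hEq : (i : ℕ) + 1 = N := by omega
      have hzero : TT μ p d ((i : ℕ) + 1) j = 0 := by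
        refine TT_high hmom hp d _ _ ?_
        omega
      rw [if_neg (by omega), hzero, mul_zero, add_zero]
      by_cases h0 : (i : ℕ) = 0
      · rw [if_neg (by omega), if_pos h0]
        simp [h0]
      · rw [if_pos (by constructor <;> omega), if_neg h0]
        ring

end More3

lemma jacobi_symm {μ : Measure ℝ} {p : ℕ → Polynomial ℝ} (N : ℕ) (i j : Fin N) :
    jacobiMatrix μ p N i j = jacobiMatrix μ p N j i := by
  rw [jacobi_apply, jacobi_apply]
  by_cases h1 : (i : ℕ) = (j : ℕ)
  · rw [if_pos h1, if_pos h1.symm, h1]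
  · by_cases h2 : (i : ℕ) + 1 = (j : ℕ)
    · rw [if_neg h1, if_pos h2, if_neg (Ne.symm h1), if_neg (by omega), if_pos h2]
    · by_cases h3 : (j : ℕ) + 1 = (i : ℕ)
      · rw [if_neg h1, if_neg h2, if_pos h3, if_neg (Ne.symm h1), if_pos h3]
      · rw [if_neg h1, if_neg h2, if_neg h3, if_neg (Ne.symm h1), if_neg h3, if_neg h2]

/-- **exactness of the matrix-element quadrature.** Let `J` be the
`N × N` Jacobi matrix of the orthonormal polynomial sequence `(pₙ)` for `μ`, with
eigenvalues `ε k` and corresponding unit eigenvectors `Λ · k` normalized so that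
`Λ 0 k > 0`. Then for every real polynomial `f` with `n + m + deg f ≤ 2N − 1`,
`∫ pₙ(x) f(x) pₘ(x) dμ = ∑ₖ Λₙₖ f(εₖ) Λₘₖ`. -/
theorem jacobi_matrix_element_quadrature
    (μ : Measure ℝ) (p : ℕ → Polynomial ℝ)
    (hmom : ∀ k : ℕ, Integrable (fun x : ℝ => x ^ k) μ)
    (hsupp : ∀ s : Finset ℝ, μ ((s : Set ℝ))ᶜ ≠ 0)
    (hp : IsOrthonormalPolySeq μ p)
    (N : ℕ) (hN : 1 ≤ N)
    (ε : Fin N → ℝ) (Λ : Fin N → Fin N → ℝ)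
    (hdistinct : Function.Injective ε)
    (hEigen : ∀ k : Fin N,
      (jacobiMatrix μ p N).mulVec (fun i => Λ i k) = ε k • (fun i => Λ i k))
    (hUnit : ∀ k : Fin N, ∑ i : Fin N, (Λ i k) ^ 2 = 1)
    (hPos : ∀ k : Fin N, 0 < Λ ⟨0, hN⟩ k)
    (n m : Fin N) (f : Polynomial ℝ)
    (hf : (n : ℕ) + (m : ℕ) + f.natDegree ≤ 2 * N - 1) :
    ∫ x, (p (n : ℕ)).eval x * f.eval x * (p (m : ℕ)).eval x ∂μ =
      ∑ k : Fin N, Λ n k * f.eval (ε k) * Λ m k := by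
  classical
  set J := jacobiMatrix μ p N with hJdef
  set Λm : Matrix (Fin N) (Fin N) ℝ := Matrix.of (fun i k => Λ i k) with hΛm
  have hsymM : Jᵀ = J := by
    ext i j
    rw [Matrix.transpose_apply]
    exact jacobi_symm N j i
  -- orthonormality of eigenvector columns
  have horto : ∀ k l : Fin N, (∑ i : Fin N, Λ i k * Λ i l) = if k = l then (1:ℝ) else 0 := by
    intro k l
    by_cases hkl : k = l
    · subst hkl
      rw [if_pos rfl, ← hUnit k]
      exact Finset.sum_congr rfl fun i _ => (sq (Λ i k)).symm
    · rw [if_neg hkl]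
      set vk : Fin N → ℝ := fun i => Λ i k
      set vl : Fin N → ℝ := fun i => Λ i l
      have h1 : J.mulVec vk ⬝ᵥ vl = ε k * (vk ⬝ᵥ vl) := by
        rw [hEigen k, smul_dotProduct]
        rfl
      have h2 : vk ⬝ᵥ J.mulVec vl = ε l * (vk ⬝ᵥ vl) := by
        rw [hEigen l, dotProduct_smul]
        rfl
      have h3 : vk ⬝ᵥ J.mulVec vl = J.mulVec vk ⬝ᵥ vl := by
        rw [Matrix.dotProduct_mulVec, ← Matrix.mulVec_transpose, hsymM]
      have h4 : (ε k - ε l) * (vk ⬝ᵥ vl) = 0 := by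
        rw [sub_mul, ← h1, ← h2, h3, sub_self]
      have h5 : ε k - ε l ≠ 0 := sub_ne_zero_of_ne (fun h => hkl (hdistinct h))
      have h6 : vk ⬝ᵥ vl = 0 := by
        rcases mul_eq_zero.mp h4 with h | h
        · exact absurd h h5
        · exact h
      simpa [dotProduct, vk, vl] using h6
  have hΛtΛ : Λmᵀ * Λm = 1 := by
    ext k l
    rw [Matrix.mul_apply, Matrix.one_apply]
    simpa [Matrix.transpose_apply, hΛm] using horto k l
  have hΛΛt : Λm * Λmᵀ = 1 := mul_eq_one_comm.mp hΛtΛ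
  have hJL : J * Λm = Λm * Matrix.diagonal ε := by
    ext i k
    rw [Matrix.mul_apply, Matrix.mul_diagonal]
    have := congrFun (hEigen k) i
    simp only [Matrix.mulVec, dotProduct, Pi.smul_apply, smul_eq_mul] at this
    rw [show ∑ l : Fin N, J i l * Λm l k = ∑ l : Fin N, J i l * Λ l k from rfl, this]
    exact mul_comm _ _
  have hJeq : J = Λm * Matrix.diagonal ε * Λmᵀ := by
    calc J = J * (Λm * Λmᵀ) := by rw [hΛΛt, Matrix.mul_one]
    _ = (J * Λm) * Λmᵀ := by rw [Matrix.mul_assoc]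
    _ = Λm * Matrix.diagonal ε * Λmᵀ := by rw [hJL]
  have key : ∀ A B : Matrix (Fin N) (Fin N) ℝ,
      (Λm * A * Λmᵀ) * (Λm * B * Λmᵀ) = Λm * (A * B) * Λmᵀ := by
    intro A B
    calc (Λm * A * Λmᵀ) * (Λm * B * Λmᵀ)
        = Λm * (A * ((Λmᵀ * Λm) * (B * Λmᵀ))) := by simp only [Matrix.mul_assoc]
    _ = Λm * (A * (B * Λmᵀ)) := by rw [hΛtΛ, Matrix.one_mul]
    _ = Λm * (A * B) * Λmᵀ := by simp only [Matrix.mul_assoc]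
  have hJd : ∀ d : ℕ, J ^ d = Λm * Matrix.diagonal (fun k => ε k ^ d) * Λmᵀ := by
    intro d
    induction d with
    | zero =>
      rw [pow_zero]
      have h1 : Matrix.diagonal (fun k : Fin N => ε k ^ 0) = 1 := by simp
      rw [h1, Matrix.mul_one, hΛΛt]
    | succ d ih =>
      rw [pow_succ, ih, hJeq, key, Matrix.diagonal_mul_diagonal]
      have h2 : (fun k => ε k ^ d * ε k) = fun k => ε k ^ (d + 1) := by
        funext k; rw [pow_succ]
      rw [h2]
  have hentry : ∀ d : ℕ, (J ^ d) n m = ∑ k : Fin N, Λ n k * ε k ^ d * Λ m k := by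
    intro d
    rw [hJd d, Matrix.mul_apply]
    refine Finset.sum_congr rfl fun k _ => ?_
    rw [Matrix.mul_diagonal, Matrix.transpose_apply]
    rfl
  have hperd : ∀ d : ℕ, d ≤ f.natDegree →
      TT μ p d (n : ℕ) (m : ℕ) = ∑ k : Fin N, Λ n k * ε k ^ d * Λ m k := by
    intro d hd
    rw [← hentry d, Jpow hmom hp N d n m (by omega)]
  -- decompose f
  have hLHS : ∫ x, (p (n : ℕ)).eval x * f.eval x * (p (m : ℕ)).eval x ∂μ
      = ∑ d ∈ Finset.range (f.natDegree + 1), f.coeff d * TT μ p d (n : ℕ) (m : ℕ) := by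
    have h0 : ∫ x, (p (n : ℕ)).eval x * f.eval x * (p (m : ℕ)).eval x ∂μ
        = Lint μ (p (n : ℕ) * f * p (m : ℕ)) := by
      simp [Lint, Polynomial.eval_mul]
    have hdecomp : p (n : ℕ) * f * p (m : ℕ)
        = ∑ d ∈ Finset.range (f.natDegree + 1),
            f.coeff d • (X ^ d * p (n : ℕ) * p (m : ℕ)) := by
      have hfsum : f = ∑ d ∈ Finset.range (f.natDegree + 1), C (f.coeff d) * X ^ d := by
        conv_lhs => rw [Polynomial.as_sum_range f]
        exact Finset.sum_congr rfl fun d _ => (Polynomial.C_mul_X_pow_eq_monomial).symm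
      conv_lhs => rw [hfsum]
      rw [Finset.mul_sum, Finset.sum_mul]
      exact Finset.sum_congr rfl fun d _ => by
        rw [Polynomial.smul_eq_C_mul]; ring
    rw [h0, hdecomp, Lint_sum hmom]
    exact Finset.sum_congr rfl fun d _ => by rw [Lint_smul]; rfl
  rw [hLHS]
  have hRHS : ∑ k : Fin N, Λ n k * f.eval (ε k) * Λ m k
      = ∑ d ∈ Finset.range (f.natDegree + 1),
          f.coeff d * ∑ k : Fin N, Λ n k * ε k ^ d * Λ m k := by
    have h1 : ∀ k : Fin N, Λ n k * f.eval (ε k) * Λ m k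
        = ∑ d ∈ Finset.range (f.natDegree + 1),
            f.coeff d * (Λ n k * ε k ^ d * Λ m k) := by
      intro k
      rw [Polynomial.eval_eq_sum_range, Finset.mul_sum, Finset.sum_mul]
      exact Finset.sum_congr rfl fun d _ => by ring
    rw [Finset.sum_congr rfl fun k _ => h1 k, Finset.sum_comm]
    exact Finset.sum_congr rfl fun d _ => by rw [Finset.mul_sum]
  rw [hRHS]
  refine Finset.sum_congr rfl fun d hd => ?_
  rw [hperd d (by simpa using Nat.lt_succ_iff.mp (Finset.mem_range.mp hd))]
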